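/- Soundness of the tactics transition system: if a sequence of goals S transitions in finitely many steps to the empty goal sequence (S ▷⁺ □), then every sequent occurring in S is derivable in natural deduction for minimal propositional logic. -/

import Mathlib

/-- Formulas of minimal propositional logic. -/
inductive Fm : Type
  | var : ℕ → Fm
  | imp : Fm → Fm → Fm
  | conj : Fm → Fm → Fm
  | disj : Fm → Fm → Fm
deriving DecidableEq

abbrev Ctx := Set Fm

/-- Natural deduction for minimal propositional logic. -/
inductive Nd : Ctx → Fm → Prop
  | hyp {Γ A} : A ∈ Γ → Nd Γ A
  | impI {Γ A B} : Nd (insert A Γ) B → Nd Γ (Fm.imp A B)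
  | impE {Γ A B} : Nd Γ (Fm.imp A B) → Nd Γ A → Nd Γ B
  | andI {Γ A B} : Nd Γ A → Nd Γ B → Nd Γ (Fm.conj A B)
  | andE1 {Γ A B} : Nd Γ (Fm.conj A B) → Nd Γ A
  | andE2 {Γ A B} : Nd Γ (Fm.conj A B) → Nd Γ B
  | orI1 {Γ A B} : Nd Γ A → Nd Γ (Fm.disj A B)
  | orI2 {Γ A B} : Nd Γ B → Nd Γ (Fm.disj A B)
  | orE {Γ A B C} : Nd Γ (Fm.disj A B) → Nd (insert A Γ) C → Nd (insert B Γ) C → Nd Γ C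

/-- Sequents (judgements) Γ ⊢ A. -/
abbrev Seqt := Ctx × Fm

/-- One step of the tactics transition system on goal sequences. -/
inductive Step : List Seqt → List Seqt → Prop
  | intro {Γ A B S} : Step ((Γ, Fm.imp A B) :: S) ((insert A Γ, B) :: S)
  | split {Γ A B S} : Step ((Γ, Fm.conj A B) :: S) ((Γ, A) :: (Γ, B) :: S)
  | left {Γ A B S} : Step ((Γ, Fm.disj A B) :: S) ((Γ, A) :: S)
  | right {Γ A B S} : Step ((Γ, Fm.disj A B) :: S) ((Γ, B) :: S)
  | apply {Γ A B S} :
      Step ((insert (Fm.imp A B) Γ, B) :: S) ((insert (Fm.imp A B) Γ, A) :: S)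
  | destructAnd {Γ A B C S} :
      Step ((insert (Fm.conj A B) Γ, C) :: S) ((insert A (insert B Γ), C) :: S)
  | destructOr {Γ A B C S} :
      Step ((insert (Fm.disj A B) Γ, C) :: S) ((insert A Γ, C) :: (insert B Γ, C) :: S)
  | assert {Γ C S} (A : Fm) : Step ((Γ, C) :: S) ((Γ, A) :: (insert A Γ, C) :: S)
  | cut {Γ C S} (A : Fm) : Step ((Γ, C) :: S) ((Γ, Fm.imp A C) :: (Γ, A) :: S)
  | triv {Γ A S} : A ∈ Γ → Step ((Γ, A) :: S) S

lemma Nd.weaken {Γ A} (h : Nd Γ A) : ∀ Γ', Γ ⊆ Γ' → Nd Γ' A := by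
  induction h with
  | hyp hm => exact fun Γ' hs => Nd.hyp (hs hm)
  | impI _ ih => exact fun Γ' hs => Nd.impI (ih _ (Set.insert_subset_insert hs))
  | impE _ _ ih1 ih2 => exact fun Γ' hs => Nd.impE (ih1 _ hs) (ih2 _ hs)
  | andI _ _ ih1 ih2 => exact fun Γ' hs => Nd.andI (ih1 _ hs) (ih2 _ hs)
  | andE1 _ ih => exact fun Γ' hs => Nd.andE1 (ih _ hs)
  | andE2 _ ih => exact fun Γ' hs => Nd.andE2 (ih _ hs)
  | orI1 _ ih => exact fun Γ' hs => Nd.orI1 (ih _ hs)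
  | orI2 _ ih => exact fun Γ' hs => Nd.orI2 (ih _ hs)
  | orE _ _ _ ih1 ih2 ih3 =>
      exact fun Γ' hs =>
        Nd.orE (ih1 _ hs) (ih2 _ (Set.insert_subset_insert hs))
          (ih3 _ (Set.insert_subset_insert hs))

lemma step_sound {S T : List Seqt} (h : Step S T)
    (hT : ∀ J ∈ T, Nd J.1 J.2) : ∀ J ∈ S, Nd J.1 J.2 := by
  cases h with
  | @intro Γ A B S =>
      have h1 : Nd (insert A Γ) B := hT (insert A Γ, B) (List.mem_cons_self)
      intro J hJ0
      rcases List.mem_cons.1 hJ0 with rfl | hJ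
      · exact Nd.impI h1
      · exact hT _ (List.mem_cons_of_mem _ hJ)
  | @split Γ A B S =>
      have h1 : Nd Γ A := hT (Γ, A) (List.mem_cons_self)
      have h2 : Nd Γ B := hT (Γ, B) (List.mem_cons_of_mem _ (List.mem_cons_self))
      intro J hJ0
      rcases List.mem_cons.1 hJ0 with rfl | hJ
      · exact Nd.andI h1 h2
      · exact hT _ (List.mem_cons_of_mem _ (List.mem_cons_of_mem _ hJ))
  | @left Γ A B S =>
      have h1 : Nd Γ A := hT (Γ, A) (List.mem_cons_self)
      intro J hJ0
      rcases List.mem_cons.1 hJ0 with rfl | hJ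
      · exact Nd.orI1 h1
      · exact hT _ (List.mem_cons_of_mem _ hJ)
  | @right Γ A B S =>
      have h1 : Nd Γ B := hT (Γ, B) (List.mem_cons_self)
      intro J hJ0
      rcases List.mem_cons.1 hJ0 with rfl | hJ
      · exact Nd.orI2 h1
      · exact hT _ (List.mem_cons_of_mem _ hJ)
  | @apply Γ A B S =>
      have h1 : Nd (insert (Fm.imp A B) Γ) A :=
        hT (insert (Fm.imp A B) Γ, A) (List.mem_cons_self)
      intro J hJ0
      rcases List.mem_cons.1 hJ0 with rfl | hJ
      · exact Nd.impE (Nd.hyp (Set.mem_insert _ _)) h1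
      · exact hT _ (List.mem_cons_of_mem _ hJ)
  | @destructAnd Γ A B C S =>
      have h1 : Nd (insert A (insert B Γ)) C :=
        hT (insert A (insert B Γ), C) (List.mem_cons_self)
      intro J hJ0
      rcases List.mem_cons.1 hJ0 with rfl | hJ
      · have h2 : Nd (insert (Fm.conj A B) Γ) (Fm.imp B (Fm.imp A C)) :=
          (Nd.impI (Nd.impI h1)).weaken _ (Set.subset_insert _ _)
        have hc : Nd (insert (Fm.conj A B) Γ) (Fm.conj A B) :=
          Nd.hyp (Set.mem_insert _ _)
        exact Nd.impE (Nd.impE h2 (Nd.andE2 hc)) (Nd.andE1 hc)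
      · exact hT _ (List.mem_cons_of_mem _ hJ)
  | @destructOr Γ A B C S =>
      have h1 : Nd (insert A Γ) C := hT (insert A Γ, C) (List.mem_cons_self)
      have h2 : Nd (insert B Γ) C :=
        hT (insert B Γ, C) (List.mem_cons_of_mem _ (List.mem_cons_self))
      intro J hJ0
      rcases List.mem_cons.1 hJ0 with rfl | hJ
      · refine Nd.orE (Nd.hyp (Set.mem_insert _ _))
          (h1.weaken _ ?_) (h2.weaken _ ?_) <;>
        exact Set.insert_subset_insert (Set.subset_insert _ _)
      · exact hT _ (List.mem_cons_of_mem _ (List.mem_cons_of_mem _ hJ))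
  | @assert Γ C S A =>
      have h1 : Nd Γ A := hT (Γ, A) (List.mem_cons_self)
      have h2 : Nd (insert A Γ) C :=
        hT (insert A Γ, C) (List.mem_cons_of_mem _ (List.mem_cons_self))
      intro J hJ0
      rcases List.mem_cons.1 hJ0 with rfl | hJ
      · exact Nd.impE (Nd.impI h2) h1
      · exact hT _ (List.mem_cons_of_mem _ (List.mem_cons_of_mem _ hJ))
  | @cut Γ C S A =>
      have h1 : Nd Γ (Fm.imp A C) := hT (Γ, Fm.imp A C) (List.mem_cons_self)
      have h2 : Nd Γ A := hT (Γ, A) (List.mem_cons_of_mem _ (List.mem_cons_self))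
      intro J hJ0
      rcases List.mem_cons.1 hJ0 with rfl | hJ
      · exact Nd.impE h1 h2
      · exact hT _ (List.mem_cons_of_mem _ (List.mem_cons_of_mem _ hJ))
  | @triv Γ A S hm =>
      intro J hJ0
      rcases List.mem_cons.1 hJ0 with rfl | hJ
      · exact Nd.hyp hm
      · exact hT _ hJ

theorem stmt10 {S : List Seqt} (h : Relation.TransGen Step S []) :
    ∀ J ∈ S, Nd J.1 J.2 := by
  induction h using Relation.TransGen.head_induction_on with
  | single hstep => exact step_sound hstep (by simp)
  | head hstep _ ih => exact step_sound hstep ih
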